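/- There exist constants 0 < c ≤ C < ∞ and ε > 0 such that for all y ∈ [0, 1] and all ν > 0, t > 0 with ν·t ≤ ε: c·√(t/ν) ≤ t + Σ_{k=1}^∞ cos²(kπy)·(1 − exp(−2π²k²νt))/(π²k²ν) ≤ C·√(t/ν). In particular, for the Neumann case both the upper and the lower bound hold uniformly over the entire interval [0, 1], not only on a subinterval separated from the boundary. -/

import Mathlib

open Real Finset

lemma cos_sq_pair (b : ℝ) : 1/4 ≤ Real.cos b ^ 2 + Real.cos (2*b) ^ 2 := by
  rw [Real.cos_two_mul]
  nlinarith [sq_nonneg (4 * Real.cos b ^ 2 - 3/2)]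

lemma tail_partial (K : ℕ) (hK : 1 ≤ K) (N : ℕ) :
    ∑ i ∈ Finset.range N, (1:ℝ)/((i:ℝ)+K+1)^2 ≤ 1/K - 1/((N:ℝ)+K) := by
  induction N with
  | zero => simp
  | succ N ih =>
    rw [Finset.sum_range_succ]
    have hK1 : (1:ℝ) ≤ (K:ℝ) := by exact_mod_cast hK
    have hx : (0:ℝ) < (N:ℝ) + K := by positivity
    have hstep : (1:ℝ)/((N:ℝ)+K+1)^2 ≤ 1/((N:ℝ)+K) - 1/((N:ℝ)+K+1) := by
      rw [div_sub_div _ _ (ne_of_gt hx) (by positivity),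
        div_le_div_iff₀ (by positivity) (by positivity)]
      ring_nf
      nlinarith [hx]
    push_cast
    have he : (N:ℝ) + 1 + K = (N:ℝ) + K + 1 := by ring
    rw [he]
    linarith [ih]

lemma summable_inv_sq_shift (K : ℕ) : Summable (fun i : ℕ => (1:ℝ)/((i:ℝ)+K+1)^2) := by
  have h := (summable_nat_add_iff (f := fun n : ℕ => (1:ℝ)/(n:ℝ)^2) (K+1)).mpr
    (Real.summable_one_div_nat_pow.mpr (by norm_num))
  refine h.congr fun i => ?_
  push_cast
  ring_nf

lemma tail_tsum (K : ℕ) (hK : 1 ≤ K) :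
    ∑' i : ℕ, (1:ℝ)/((i:ℝ)+K+1)^2 ≤ 1/(K:ℝ) := by
  refine tsum_le_of_sum_range_le (fun i => by positivity) (fun N => ?_)
  have h := tail_partial K hK N
  have hK0 : (0:ℝ) < K := by exact_mod_cast hK
  have : (0:ℝ) ≤ 1/((N:ℝ)+K) := by positivity
  linarith

set_option maxHeartbeats 1000000 in
theorem neumann_spectral_two_sided_bound :
    ∃ c C ε : ℝ, 0 < c ∧ c ≤ C ∧ 0 < ε ∧
      ∀ y ν t : ℝ, y ∈ Set.Icc (0 : ℝ) 1 → 0 < ν → 0 < t → ν * t ≤ ε →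
        c * Real.sqrt (t / ν) ≤
          (t + ∑' k : ℕ, Real.cos (((k : ℝ) + 1) * Real.pi * y) ^ 2 *
            (1 - Real.exp (-2 * Real.pi ^ 2 * ((k : ℝ) + 1) ^ 2 * ν * t)) /
            (Real.pi ^ 2 * ((k : ℝ) + 1) ^ 2 * ν)) ∧
        (t + ∑' k : ℕ, Real.cos (((k : ℝ) + 1) * Real.pi * y) ^ 2 *
            (1 - Real.exp (-2 * Real.pi ^ 2 * ((k : ℝ) + 1) ^ 2 * ν * t)) /
            (Real.pi ^ 2 * ((k : ℝ) + 1) ^ 2 * ν)) ≤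
          C * Real.sqrt (t / ν) := by
  have hπ : (0:ℝ) < π := Real.pi_pos
  have hπ3 : (3:ℝ) ≤ π := by linarith [Real.pi_gt_three]
  refine ⟨(256*π^2)⁻¹, 6, 1, by positivity, ?_, one_pos, ?_⟩
  · have h1 : (1:ℝ) ≤ 256*π^2 := by nlinarith
    have := inv_le_one_of_one_le₀ h1
    linarith
  intro y ν t hy hν ht hνt
  set f : ℕ → ℝ := fun k => Real.cos (((k : ℝ) + 1) * π * y) ^ 2 *
      (1 - Real.exp (-2 * π ^ 2 * ((k : ℝ) + 1) ^ 2 * ν * t)) /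
      (π ^ 2 * ((k : ℝ) + 1) ^ 2 * ν) with hfdef
  have ha : 0 < ν * t := mul_pos hν ht
  have hsa : 0 < Real.sqrt (ν*t) := Real.sqrt_pos.mpr ha
  have hsa1 : Real.sqrt (ν*t) ≤ 1 := by
    rw [show (1:ℝ) = Real.sqrt 1 by simp]
    exact Real.sqrt_le_sqrt hνt
  -- sqrt identities
  have hss : Real.sqrt ν * Real.sqrt t = Real.sqrt (ν*t) := (Real.sqrt_mul hν.le t).symm
  have hsν : Real.sqrt ν * Real.sqrt ν = ν := Real.mul_self_sqrt hν.le
  have hst : Real.sqrt t * Real.sqrt t = t := Real.mul_self_sqrt ht.le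
  have hsν0 : 0 < Real.sqrt ν := Real.sqrt_pos.mpr hν
  have hst0 : 0 < Real.sqrt t := Real.sqrt_pos.mpr ht
  have hq : Real.sqrt (t/ν) = Real.sqrt t / Real.sqrt ν := Real.sqrt_div ht.le ν
  have hid : Real.sqrt (ν*t) / ν = Real.sqrt (t/ν) := by
    rw [hq, ← hss]
    field_simp
    nlinarith
  have hid2 : t / Real.sqrt (ν*t) = Real.sqrt (t/ν) := by
    rw [hq, ← hss]
    rw [div_eq_div_iff (by positivity) (by positivity)]
    nlinarith
  have hid3 : Real.sqrt (ν*t) * Real.sqrt (t/ν) = t := by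
    rw [hq, ← hss]
    field_simp
    nlinarith
  -- basic facts about f
  have hexp_le_one : ∀ k : ℕ, Real.exp (-2 * π ^ 2 * ((k : ℝ) + 1) ^ 2 * ν * t) ≤ 1 := by
    intro k
    rw [Real.exp_le_one_iff]
    have : (0:ℝ) ≤ 2 * π ^ 2 * ((k : ℝ) + 1) ^ 2 * ν * t := by positivity
    nlinarith
  have hfnn : ∀ k, 0 ≤ f k := by
    intro k
    apply div_nonneg (mul_nonneg (sq_nonneg _) (by linarith [hexp_le_one k])) (by positivity)
  have hnum_le_one : ∀ k : ℕ, Real.cos (((k : ℝ) + 1) * π * y) ^ 2 *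
      (1 - Real.exp (-2 * π ^ 2 * ((k : ℝ) + 1) ^ 2 * ν * t)) ≤ 1 := by
    intro k
    have h1 := hexp_le_one k
    have h2 : Real.cos (((k : ℝ) + 1) * π * y) ^ 2 ≤ 1 := Real.cos_sq_le_one _
    have h3 : (0:ℝ) < Real.exp (-2 * π ^ 2 * ((k : ℝ) + 1) ^ 2 * ν * t) := Real.exp_pos _
    nlinarith [sq_nonneg (Real.cos (((k : ℝ) + 1) * π * y))]
  have hfle : ∀ k, f k ≤ (π^2*ν)⁻¹ * (1/((k:ℝ)+1)^2) := by
    intro k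
    have : f k ≤ 1 / (π ^ 2 * ((k : ℝ) + 1) ^ 2 * ν) :=
      div_le_div₀ (by norm_num) (hnum_le_one k) (by positivity) le_rfl
    calc f k ≤ 1 / (π ^ 2 * ((k : ℝ) + 1) ^ 2 * ν) := this
      _ = (π^2*ν)⁻¹ * (1/((k:ℝ)+1)^2) := by
          field_simp
  have hsumf : Summable f := by
    refine Summable.of_nonneg_of_le hfnn hfle ?_
    have := (summable_inv_sq_shift 0).mul_left ((π^2*ν)⁻¹)
    refine this.congr fun i => ?_
    norm_num
  have hfle2 : ∀ k, f k ≤ 2*t := by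
    intro k
    have hx : (0:ℝ) ≤ 2 * π ^ 2 * ((k : ℝ) + 1) ^ 2 * ν * t := by positivity
    have h1 : 1 - Real.exp (-(2 * π ^ 2 * ((k : ℝ) + 1) ^ 2 * ν * t)) ≤
        2 * π ^ 2 * ((k : ℝ) + 1) ^ 2 * ν * t := by
      have := Real.add_one_le_exp (-(2 * π ^ 2 * ((k : ℝ) + 1) ^ 2 * ν * t))
      linarith
    have h1' : 1 - Real.exp (-2 * π ^ 2 * ((k : ℝ) + 1) ^ 2 * ν * t) ≤
        2 * π ^ 2 * ((k : ℝ) + 1) ^ 2 * ν * t := by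
      rw [show (-2 * π ^ 2 * ((k : ℝ) + 1) ^ 2 * ν * t)
        = -(2 * π ^ 2 * ((k : ℝ) + 1) ^ 2 * ν * t) by ring]
      exact h1
    have hnum : Real.cos (((k : ℝ) + 1) * π * y) ^ 2 *
        (1 - Real.exp (-2 * π ^ 2 * ((k : ℝ) + 1) ^ 2 * ν * t)) ≤
        2 * π ^ 2 * ((k : ℝ) + 1) ^ 2 * ν * t := by
      have h2 : Real.cos (((k : ℝ) + 1) * π * y) ^ 2 ≤ 1 := Real.cos_sq_le_one _
      have h3 : 0 ≤ 1 - Real.exp (-2 * π ^ 2 * ((k : ℝ) + 1) ^ 2 * ν * t) := by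
        linarith [hexp_le_one k]
      nlinarith [sq_nonneg (Real.cos (((k : ℝ) + 1) * π * y))]
    have : f k ≤ (2 * π ^ 2 * ((k : ℝ) + 1) ^ 2 * ν * t) / (π ^ 2 * ((k : ℝ) + 1) ^ 2 * ν) :=
      div_le_div₀ hx hnum (by positivity) le_rfl
    calc f k ≤ (2 * π ^ 2 * ((k : ℝ) + 1) ^ 2 * ν * t) / (π ^ 2 * ((k : ℝ) + 1) ^ 2 * ν) := this
      _ = 2*t := by field_simp
  -- the cutoff K
  set K : ℕ := ⌈(Real.sqrt (ν*t))⁻¹⌉₊ with hKdef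
  have hK1 : 1 ≤ K := Nat.one_le_ceil_iff.mpr (by positivity)
  have hKge : (Real.sqrt (ν*t))⁻¹ ≤ (K:ℝ) := Nat.le_ceil _
  have hKpos : (0:ℝ) < K := by exact_mod_cast hK1
  have hinv1 : (1:ℝ) ≤ (Real.sqrt (ν*t))⁻¹ := by
    rw [le_inv_comm₀ one_pos hsa]
    simpa using hsa1
  have hKle : (K:ℝ) ≤ 2/Real.sqrt (ν*t) := by
    have h := Nat.ceil_lt_add_one (le_of_lt (by positivity : (0:ℝ) < (Real.sqrt (ν*t))⁻¹))
    have : (K:ℝ) < (Real.sqrt (ν*t))⁻¹ + 1 := h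
    rw [div_eq_mul_inv]
    linarith
  -- lower bound
  have hKn1 : (K:ℝ) * Real.sqrt (ν*t) ≥ 1 := by
    rw [ge_iff_le, ← inv_mul_cancel₀ hsa.ne']
    exact mul_le_mul_of_nonneg_right hKge hsa.le
  have hexp_half : ∀ m : ℝ, (K:ℝ) ≤ m → Real.exp (-2*π^2*m^2*ν*t) ≤ 1/2 := by
    intro m hm
    have hm0 : (0:ℝ) < m := lt_of_lt_of_le hKpos hm
    have h1 : 1 ≤ m * Real.sqrt (ν*t) :=
      le_trans hKn1 (mul_le_mul_of_nonneg_right hm hsa.le)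
    have h2 : (m * Real.sqrt (ν*t))^2 = m^2 * (ν*t) := by
      rw [mul_pow, Real.sq_sqrt ha.le]
    have hm2 : 1 ≤ m^2 * (ν*t) := by nlinarith [h1, h2]
    have hπ2 : (9:ℝ) ≤ π^2 := by nlinarith
    have harg : -2*π^2*m^2*ν*t ≤ -1 := by nlinarith [hm2, hπ2]
    calc Real.exp (-2*π^2*m^2*ν*t) ≤ Real.exp (-1) := Real.exp_le_exp.mpr harg
      _ ≤ 1/2 := by
          rw [Real.exp_neg]
          have h2 : (2:ℝ) ≤ Real.exp 1 := by
            have := Real.add_one_le_exp (1:ℝ)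
            linarith
          rw [inv_le_comm₀ (Real.exp_pos 1) (by norm_num : (0:ℝ) < 1/2)]
          norm_num
          linarith
  -- generic per-mode lower bound
  have hbound : ∀ (m b : ℝ), (K:ℝ) ≤ m → m ≤ 4*(K:ℝ) →
      Real.cos b ^ 2 * (32*π^2*(K:ℝ)^2*ν)⁻¹ ≤
        Real.cos b ^ 2 * (1 - Real.exp (-2*π^2*m^2*ν*t)) / (π^2*m^2*ν) := by
    intro m b hm1 hm4
    have hm0 : (0:ℝ) < m := lt_of_lt_of_le hKpos hm1
    have hE := hexp_half m hm1
    have hcore : (32*π^2*(K:ℝ)^2*ν)⁻¹ ≤ (1 - Real.exp (-2*π^2*m^2*ν*t)) / (π^2*m^2*ν) := by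
      rw [inv_eq_one_div, div_le_div_iff₀ (by positivity) (by positivity)]
      have hmK : m^2 ≤ 16*(K:ℝ)^2 := by nlinarith
      have hP : (0:ℝ) < π^2*(K:ℝ)^2*ν := by positivity
      have hQ : (0:ℝ) ≤ π^2*ν := by positivity
      nlinarith [hE, hmK, hP, hQ]
    rw [mul_div_assoc]
    exact mul_le_mul_of_nonneg_left hcore (sq_nonneg _)
  set F1 : Finset ℕ := Finset.Ico (K-1) (2*K-1) with hF1
  have hcard : F1.card = K := by rw [hF1, Nat.card_Ico]; omega
  have hdisj : Disjoint F1 (F1.image (fun j => 2*j+1)) := by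
    rw [Finset.disjoint_left]
    intro x hx1 hx2
    rw [Finset.mem_image] at hx2
    obtain ⟨j, hj, rfl⟩ := hx2
    rw [hF1, Finset.mem_Ico] at hx1 hj
    omega
  have hkey : ∀ j ∈ F1, (128*π^2*(K:ℝ)^2*ν)⁻¹ ≤ f j + f (2*j+1) := by
    intro j hj
    rw [hF1, Finset.mem_Ico] at hj
    have hjK : (K:ℝ) ≤ (j:ℝ)+1 := by
      have : K ≤ j+1 := by omega
      exact_mod_cast this
    have hj2K : (j:ℝ)+1 ≤ 2*(K:ℝ) := by
      have : j+1 ≤ 2*K := by omega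
      exact_mod_cast this
    have hj4K : (j:ℝ)+1 ≤ 4*(K:ℝ) := by linarith
    have hK2n : (K:ℝ) ≤ 2*((j:ℝ)+1) := by linarith
    have h2n4K : 2*((j:ℝ)+1) ≤ 4*(K:ℝ) := by linarith
    have hfj : Real.cos (((j:ℝ)+1)*π*y) ^ 2 * (32*π^2*(K:ℝ)^2*ν)⁻¹ ≤ f j :=
      hbound ((j:ℝ)+1) (((j:ℝ)+1)*π*y) hjK hj4K
    have hc : ((2*j+1:ℕ):ℝ)+1 = 2*((j:ℝ)+1) := by push_cast; ring
    have hfj2 : Real.cos (2*(((j:ℝ)+1)*π*y)) ^ 2 * (32*π^2*(K:ℝ)^2*ν)⁻¹ ≤ f (2*j+1) := by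
      have h := hbound (2*((j:ℝ)+1)) (2*(((j:ℝ)+1)*π*y)) hK2n h2n4K
      have harg : (2*((j:ℝ)+1))*π*y = 2*(((j:ℝ)+1)*π*y) := by ring
      calc Real.cos (2*(((j:ℝ)+1)*π*y)) ^ 2 * (32*π^2*(K:ℝ)^2*ν)⁻¹
          ≤ Real.cos (2*(((j:ℝ)+1)*π*y)) ^ 2 *
            (1 - Real.exp (-2*π^2*(2*((j:ℝ)+1))^2*ν*t)) / (π^2*(2*((j:ℝ)+1))^2*ν) := h
        _ = f (2*j+1) := by
            rw [hfdef]
            simp only []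
            rw [hc, harg]
    have hp := cos_sq_pair (((j:ℝ)+1)*π*y)
    have hcoef : (0:ℝ) ≤ (32*π^2*(K:ℝ)^2*ν)⁻¹ := by positivity
    have hquarter : (128*π^2*(K:ℝ)^2*ν)⁻¹ = (1/4)*(32*π^2*(K:ℝ)^2*ν)⁻¹ := by
      rw [show (128*π^2*(K:ℝ)^2*ν) = 4*(32*π^2*(K:ℝ)^2*ν) by ring, mul_inv]
      norm_num
    rw [hquarter]
    nlinarith [hfj, hfj2, hp, hcoef]
  have hsum_lb : (K:ℝ) * (128*π^2*(K:ℝ)^2*ν)⁻¹ ≤ ∑' k, f k := by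
    have h1 : ∑ x ∈ F1 ∪ F1.image (fun j => 2*j+1), f x ≤ ∑' k, f k :=
      Summable.sum_le_tsum _ (fun k _ => hfnn k) hsumf
    rw [Finset.sum_union hdisj] at h1
    have h2 : ∑ x ∈ F1.image (fun j => 2*j+1), f x = ∑ j ∈ F1, f (2*j+1) :=
      Finset.sum_image (fun a _ b _ h => by omega)
    have h3 : (K:ℝ) * (128*π^2*(K:ℝ)^2*ν)⁻¹ ≤ ∑ j ∈ F1, (f j + f (2*j+1)) := by
      have h := Finset.card_nsmul_le_sum F1 _ _ hkey
      rw [hcard] at h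
      simpa [nsmul_eq_mul] using h
    rw [Finset.sum_add_distrib] at h3
    linarith
  have hK2 : (K:ℝ) * Real.sqrt (ν*t) ≤ 2 := by
    have h := mul_le_mul_of_nonneg_right hKle hsa.le
    rw [div_mul_cancel₀ _ hsa.ne'] at h
    exact h
  have hlow : (256*π^2)⁻¹ * Real.sqrt (t/ν) ≤ ∑' k, f k := by
    refine le_trans ?_ hsum_lb
    rw [← hid]
    have he : (256*π^2)⁻¹ * (Real.sqrt (ν*t)/ν) = Real.sqrt (ν*t) / (256*π^2*ν) := by
      field_simp
    have he2 : (K:ℝ) * (128*π^2*(K:ℝ)^2*ν)⁻¹ = 1/(128*π^2*(K:ℝ)*ν) := by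
      rw [eq_div_iff (by positivity), mul_comm]
      field_simp
    rw [he, he2, div_le_div_iff₀ (by positivity) (by positivity)]
    have hPν : (0:ℝ) < π^2*ν := by positivity
    nlinarith [hK2, hPν, hsa.le]
  -- upper bound pieces
  have hsplit := Summable.sum_add_tsum_nat_add (f := f) K hsumf
  have hhead : ∑ i ∈ Finset.range K, f i ≤ (K:ℝ) * (2*t) := by
    have h := Finset.sum_le_card_nsmul (Finset.range K) f (2*t) (fun i _ => hfle2 i)
    simpa [nsmul_eq_mul] using h
  have htail : ∑' i, f (i+K) ≤ (π^2*ν)⁻¹ * (1/(K:ℝ)) := by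
    have hb : ∀ i : ℕ, f (i+K) ≤ (π^2*ν)⁻¹ * ((1:ℝ)/((i:ℝ)+K+1)^2) := by
      intro i
      have h := hfle (i+K)
      have hc : ((i+K:ℕ):ℝ) = (i:ℝ)+K := by push_cast; ring
      rw [hc] at h
      exact h
    have h1 : ∑' i, f (i+K) ≤ ∑' i : ℕ, (π^2*ν)⁻¹ * ((1:ℝ)/((i:ℝ)+K+1)^2) :=
      Summable.tsum_le_tsum hb ((summable_nat_add_iff K).mpr hsumf) ((summable_inv_sq_shift K).mul_left _)
    have h2 : ∑' i : ℕ, (π^2*ν)⁻¹ * ((1:ℝ)/((i:ℝ)+K+1)^2) =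
        (π^2*ν)⁻¹ * ∑' i : ℕ, (1:ℝ)/((i:ℝ)+K+1)^2 := tsum_mul_left
    rw [h2] at h1
    have h3 := tail_tsum K hK1
    have h4 : (π^2*ν)⁻¹ * ∑' i : ℕ, (1:ℝ)/((i:ℝ)+K+1)^2 ≤ (π^2*ν)⁻¹*(1/(K:ℝ)) :=
      mul_le_mul_of_nonneg_left h3 (by positivity)
    linarith
  have hA : (K:ℝ)*(2*t) ≤ 4*Real.sqrt (t/ν) := by
    have h := mul_le_mul_of_nonneg_right hKle (by positivity : (0:ℝ) ≤ 2*t)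
    have he : (2/Real.sqrt (ν*t))*(2*t) = 4*(t/Real.sqrt (ν*t)) := by ring
    rw [he, hid2] at h
    exact h
  have hB : (π^2*ν)⁻¹*(1/(K:ℝ)) ≤ Real.sqrt (t/ν) := by
    have h1 : (1:ℝ)/(K:ℝ) ≤ Real.sqrt (ν*t) := by
      rw [div_le_iff₀ hKpos]
      nlinarith [hKn1]
    have h2 : (π^2*ν)⁻¹*(1/(K:ℝ)) ≤ (π^2*ν)⁻¹*Real.sqrt (ν*t) :=
      mul_le_mul_of_nonneg_left h1 (by positivity)
    have h3 : (π^2*ν)⁻¹*Real.sqrt (ν*t) ≤ ν⁻¹ * Real.sqrt (ν*t) := by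
      have hi : (π^2*ν)⁻¹ ≤ ν⁻¹ := by
        apply inv_anti₀ hν
        have h9 : (1:ℝ) ≤ π^2 := by nlinarith
        nlinarith [mul_le_mul_of_nonneg_right h9 hν.le]
      exact mul_le_mul_of_nonneg_right hi hsa.le
    have h4 : ν⁻¹ * Real.sqrt (ν*t) = Real.sqrt (t/ν) := by
      rw [← hid]
      ring
    rw [h4] at h3
    linarith
  have hC : t ≤ Real.sqrt (t/ν) := by
    have h := mul_le_mul_of_nonneg_right hsa1 (Real.sqrt_nonneg (t/ν))
    rw [hid3, one_mul] at h
    exact h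
  constructor
  · linarith only [hlow, ht]
  · linarith only [hsplit, hhead, htail, hA, hB, hC]
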